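/- At the MBR point, where t·α = d·β with α, β > 0 real, t ≥ 1, d ≥ k ≥ 2 naturals, and m - ℓ = a·t + b with a ≥ 1 and 1 ≤ b ≤ t - 1, the functional-repair bound strictly exceeds the exact-repair bound: a·∑_{i=0}^{k-1} min(t·α, (d-i)·β) + ∑_{i=0}^{k-1} min(b·α, (d-i)·β) > (m-ℓ)·∑_{i=0}^{k-1} min(α, (d-i)·β/t). -/

import Mathlib

theorem functional_gt_exact_at_MBR
    (m ℓ t k d a b : ℕ) (α β : ℝ)
    (hα : 0 < α) (hβ : 0 < β)
    (ht : 1 ≤ t) (hk : 2 ≤ k) (hkd : k ≤ d) (hlm : ℓ ≤ m)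
    (hMBR : (t : ℝ) * α = (d : ℝ) * β)
    (hdiv : m - ℓ = a * t + b) (ha : 1 ≤ a) (hb1 : 1 ≤ b) (hb2 : b ≤ t - 1) :
    (a : ℝ) * ∑ i ∈ Finset.range k, min ((t : ℝ) * α) (((d - i : ℕ) : ℝ) * β)
      + ∑ i ∈ Finset.range k, min ((b : ℝ) * α) (((d - i : ℕ) : ℝ) * β)
      > ((m - ℓ : ℕ) : ℝ) *
        ∑ i ∈ Finset.range k, min α (((d - i : ℕ) : ℝ) * β / t) := by
  have ht2 : 2 ≤ t := by omega
  have htR : (0:ℝ) < t := by exact_mod_cast (by omega : 0 < t)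
  have hbt : (b:ℝ) < t := by exact_mod_cast (by omega : b < t)
  have hbR : (0:ℝ) < b := by exact_mod_cast hb1
  have hbt1 : (b:ℝ)/t < 1 := (div_lt_one htR).mpr hbt
  have hbMBR : (b:ℝ) * ((t:ℝ) * α) = (b:ℝ) * ((d:ℝ) * β) := by rw [hMBR]
  -- (d - i) β ≤ d β = t α for i < k
  have hdi : ∀ i ∈ Finset.range k, ((d - i : ℕ) : ℝ) ≤ (d : ℝ) := by
    intro i _; exact_mod_cast Nat.sub_le d i
  have h1 : ∀ i ∈ Finset.range k,
      min ((t : ℝ) * α) (((d - i : ℕ) : ℝ) * β) = ((d - i : ℕ) : ℝ) * β := by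
    intro i hi
    exact min_eq_right (by nlinarith [hdi i hi])
  have h2 : ∀ i ∈ Finset.range k,
      min α (((d - i : ℕ) : ℝ) * β / t) = ((d - i : ℕ) : ℝ) * β / t := by
    intro i hi
    apply min_eq_right
    rw [div_le_iff₀ htR]
    nlinarith [hdi i hi]
  rw [Finset.sum_congr rfl h1, Finset.sum_congr rfl h2]
  have hml : ((m - ℓ : ℕ) : ℝ) = (a : ℝ) * t + b := by
    rw [hdiv]; push_cast; ring
  rw [hml]
  set S := ∑ i ∈ Finset.range k, ((d - i : ℕ) : ℝ) * β with hS
  have hsumdiv : ∑ i ∈ Finset.range k, ((d - i : ℕ) : ℝ) * β / t = S / t :=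
    (Finset.sum_div _ _ _).symm
  rw [hsumdiv]
  -- key strict inequality on the second sum
  have hkey : ∑ i ∈ Finset.range k, (b : ℝ) / t * (((d - i : ℕ) : ℝ) * β)
      < ∑ i ∈ Finset.range k, min ((b : ℝ) * α) (((d - i : ℕ) : ℝ) * β) := by
    apply Finset.sum_lt_sum
    · intro i hi
      have hd0 : (0:ℝ) ≤ ((d - i : ℕ) : ℝ) := Nat.cast_nonneg _
      apply le_min
      · rw [div_mul_eq_mul_div, div_le_iff₀ htR]
        nlinarith [mul_le_mul_of_nonneg_left (mul_le_mul_of_nonneg_right (hdi i hi) hβ.le) hbR.le, hbMBR]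
      · nlinarith [mul_nonneg (sub_nonneg.mpr hbt1.le) (mul_nonneg hd0 hβ.le)]
    · refine ⟨1, Finset.mem_range.mpr (by omega), ?_⟩
      have hd1 : ((d - 1 : ℕ) : ℝ) = (d : ℝ) - 1 := by
        have : 1 ≤ d := by omega
        push_cast [this]; ring
      have hd2 : (2:ℝ) ≤ (d : ℝ) := by exact_mod_cast le_trans hk hkd
      apply lt_min
      · rw [div_mul_eq_mul_div, div_lt_iff₀ htR, hd1]
        nlinarith
      · rw [hd1]
        have hpos : (0:ℝ) < ((d:ℝ)-1)*β := mul_pos (by linarith) hβ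
        calc (b:ℝ)/t * (((d:ℝ)-1)*β) < 1 * (((d:ℝ)-1)*β) :=
              mul_lt_mul_of_pos_right hbt1 hpos
          _ = ((d:ℝ)-1)*β := one_mul _
  have hkeyS : (b : ℝ) / t * S < ∑ i ∈ Finset.range k, min ((b : ℝ) * α) (((d - i : ℕ) : ℝ) * β) := by
    rw [hS, Finset.mul_sum]; exact hkey
  have : ((a : ℝ) * t + b) * (S / t) = (a : ℝ) * S + (b : ℝ) / t * S := by
    field_simp
  rw [this]
  linarith
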